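/- Let T > 0, and let z₂ : [0,T] → ℝ be continuously differentiable and satisfy (1/2) d(z₂²)/dt = c(t) z₂(t)² on any interval where |z₂| ≥ R, where R > 0 with R ≥ |z₂(0)|, and suppose ∫_{t₁}^{t₂} c(t) dt ≤ C/R whenever |z₂(t)| ≥ R on [t₁,t₂] ⊆ [0,T], with C ≥ 0. Then |z₂(t)| ≤ e^{C/R} R for all t ∈ [0,T]. -/

import Mathlib

theorem stmt17 (T R C : ℝ) (hT : 0 < T) (hR : 0 < R) (hC : 0 ≤ C)
    (z₂ c : ℝ → ℝ) (hz : ContDiff ℝ 1 z₂) (hc : Continuous c)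
    (hR0 : |z₂ 0| ≤ R)
    (hderiv : ∀ t ∈ Set.Icc (0:ℝ) T, R ≤ |z₂ t| →
      HasDerivAt (fun s => z₂ s ^ 2) (2 * c t * z₂ t ^ 2) t)
    (hint : ∀ t₁ t₂ : ℝ, 0 ≤ t₁ → t₁ ≤ t₂ → t₂ ≤ T →
      (∀ t ∈ Set.Icc t₁ t₂, R ≤ |z₂ t|) → ∫ t in t₁..t₂, c t ≤ C / R) :
    ∀ t ∈ Set.Icc (0:ℝ) T, |z₂ t| ≤ Real.exp (C / R) * R := by
  intro t ht
  obtain ⟨ht0, htT⟩ := ht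
  have hexp1 : (1:ℝ) ≤ Real.exp (C / R) := Real.one_le_exp (div_nonneg hC hR.le)
  by_cases hcase : |z₂ t| ≤ R
  · nlinarith
  push_neg at hcase
  have hz2cont : Continuous fun s => |z₂ s| := hz.continuous.abs
  set S : Set ℝ := Set.Icc 0 t ∩ {s | |z₂ s| ≤ R} with hSdef
  have hSclosed : IsClosed S :=
    isClosed_Icc.inter (isClosed_le hz2cont continuous_const)
  have hSne : S.Nonempty := ⟨0, ⟨le_refl 0, ht0⟩, hR0⟩
  have hSbdd : BddAbove S := ⟨t, fun s hs => hs.1.2⟩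
  set t₁ : ℝ := sSup S with ht₁def
  have ht₁S : t₁ ∈ S := hSclosed.csSup_mem hSne hSbdd
  have ht₁0 : 0 ≤ t₁ := ht₁S.1.1
  have ht₁t : t₁ ≤ t := ht₁S.1.2
  have hz₂t₁ : |z₂ t₁| ≤ R := ht₁S.2
  have ht₁lt : t₁ < t := lt_of_le_of_ne ht₁t (by
    intro heq; rw [heq] at hz₂t₁; exact absurd hz₂t₁ (not_le.2 hcase))
  have h_gt : ∀ s, t₁ < s → s ≤ t → R ≤ |z₂ s| := by
    intro s hs1 hs2
    refine le_of_not_gt fun h => absurd (le_csSup hSbdd ⟨⟨ht₁0.trans hs1.le, hs2⟩, h.le⟩)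
      (not_le.2 hs1)
  have h_t₁ : R ≤ |z₂ t₁| := by
    have htend : Filter.Tendsto (fun s => |z₂ s|) (nhdsWithin t₁ (Set.Ioi t₁))
        (nhds (|z₂ t₁|)) := (hz2cont.tendsto t₁).mono_left nhdsWithin_le_nhds
    have hmem : Set.Ioc t₁ t ∈ nhdsWithin t₁ (Set.Ioi t₁) :=
      Ioc_mem_nhdsGT_of_mem ⟨le_refl t₁, ht₁lt⟩
    exact ge_of_tendsto htend (Filter.eventually_of_mem hmem fun s hs => h_gt s hs.1 hs.2)
  have h_ge : ∀ s ∈ Set.Icc t₁ t, R ≤ |z₂ s| := by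
    intro s hs
    rcases hs.1.eq_or_lt with h | h
    · exact h ▸ h_t₁
    · exact h_gt s h hs.2
  set I : ℝ → ℝ := fun s => ∫ u in t₁..s, c u with hIdef
  have hI : ∀ s, HasDerivAt I (c s) s := fun s =>
    intervalIntegral.integral_hasDerivAt_right (hc.intervalIntegrable _ _)
      (hc.stronglyMeasurableAtFilter _ _) hc.continuousAt
  have hIdiff : Differentiable ℝ I := fun s => (hI s).differentiableAt
  have hIcont : Continuous I := hIdiff.continuous
  set g : ℝ → ℝ := fun s => z₂ s ^ 2 * Real.exp (-(2 * I s)) with hgdef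
  have hg : ∀ s ∈ Set.Icc t₁ t, HasDerivAt g 0 s := by
    intro s hs
    have hmem : s ∈ Set.Icc (0:ℝ) T := ⟨ht₁0.trans hs.1, hs.2.trans htT⟩
    have h1 := hderiv s hmem (h_ge s hs)
    have h2 : HasDerivAt (fun u => Real.exp (-(2 * I u)))
        (Real.exp (-(2 * I s)) * (-(2 * c s))) s := (((hI s).const_mul 2).neg).exp
    have h3 : HasDerivAt g (2 * c s * z₂ s ^ 2 * Real.exp (-(2 * I s)) +
        z₂ s ^ 2 * (Real.exp (-(2 * I s)) * -(2 * c s))) s := h1.mul h2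
    convert h3 using 1
    ring
  have hgcont : ContinuousOn g (Set.Icc t₁ t) :=
    ((hz.continuous.pow 2).mul ((continuous_const.mul hIcont).neg.rexp)).continuousOn
  have hconst := constant_of_has_deriv_right_zero hgcont
    (fun x hx => (hg x ⟨hx.1, hx.2.le⟩).hasDerivWithinAt)
  have hgt : g t = g t₁ := hconst t ⟨ht₁t, le_refl t⟩
  have hIt₁ : I t₁ = 0 := intervalIntegral.integral_same
  have hIeq : z₂ t ^ 2 = z₂ t₁ ^ 2 * Real.exp (2 * I t) := by
    have h := hgt
    simp only [hgdef, hIt₁, mul_zero, neg_zero, Real.exp_zero, mul_one] at h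
    have hexpne : Real.exp (-(2 * I t)) ≠ 0 := (Real.exp_pos _).ne'
    have hmul : Real.exp (-(2 * I t)) * Real.exp (2 * I t) = 1 := by
      rw [← Real.exp_add]; ring_nf; exact Real.exp_zero
    calc z₂ t ^ 2 = z₂ t ^ 2 * (Real.exp (-(2 * I t)) * Real.exp (2 * I t)) := by
          rw [hmul, mul_one]
      _ = (z₂ t ^ 2 * Real.exp (-(2 * I t))) * Real.exp (2 * I t) := by ring
      _ = z₂ t₁ ^ 2 * Real.exp (2 * I t) := by rw [h]
  have hIt : I t ≤ C / R := hint t₁ t ht₁0 ht₁t htT h_ge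
  have hb1 : z₂ t₁ ^ 2 ≤ R ^ 2 := by
    have h := sq_abs (z₂ t₁)
    nlinarith [abs_nonneg (z₂ t₁)]
  have hb2 : Real.exp (2 * I t) ≤ Real.exp (C / R) ^ 2 := by
    have : Real.exp (C / R) ^ 2 = Real.exp (2 * (C / R)) := by
      rw [sq, ← Real.exp_add]; ring_nf
    rw [this]
    exact Real.exp_le_exp.2 (by linarith)
  have hfin : z₂ t ^ 2 ≤ (Real.exp (C / R) * R) ^ 2 := by
    have h0 : 0 ≤ Real.exp (2 * I t) := (Real.exp_pos _).le
    nlinarith [sq_nonneg (z₂ t₁)]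
  have habs : |z₂ t| ^ 2 ≤ (Real.exp (C / R) * R) ^ 2 := by rwa [sq_abs]
  nlinarith [abs_nonneg (z₂ t), mul_pos (Real.exp_pos (C / R)) hR]
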